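/- arXiv:2002.11584 — 2 statements merged into one kernel-verified Lean document; each statement's English description precedes it below -/
import Mathlib

section
/- Let A be a d×d symmetric positive definite real matrix, and let G : [0,∞) → [0,∞) be C¹ with G(0) = 0 and lim_{r→∞} √r G'(r) = 1/√2. Define Φ_A(z) = G(‖z‖_A²/2) where ‖z‖_A = √(zAzᵀ). Then the recession function of Φ_A satisfies Φ_A^∞(z) = ‖z‖_A for all z ∈ ℝ^d. -/
open Matrix Filter

lemma slope_tendsto_of_deriv_tendsto (H : ℝ → ℝ) (L : ℝ)
    (hdiff : ∀ t : ℝ, 0 < t → DifferentiableAt ℝ H t)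
    (hd : Tendsto (deriv H) atTop (nhds L)) :
    Tendsto (fun t => H t / t) atTop (nhds L) := by
  rw [Metric.tendsto_atTop] at hd ⊢
  intro ε hε
  obtain ⟨T₀, hT₀⟩ := hd (ε / 2) (by linarith)
  set T : ℝ := max T₀ 1 with hT
  have hT1 : (1:ℝ) ≤ T := le_max_right _ _
  have hTpos : 0 < T := lt_of_lt_of_le one_pos hT1
  set C : ℝ := |H T - L * T| with hC
  refine ⟨max T (2 * C / ε + 1), fun t ht => ?_⟩
  have htT : T ≤ t := le_trans (le_max_left _ _) ht
  have htC : 2 * C / ε + 1 ≤ t := le_trans (le_max_right _ _) ht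
  have htpos : 0 < t := lt_of_lt_of_le hTpos htT
  -- MVT bound
  have key : |H t - L * t - (H T - L * T)| ≤ ε / 2 * (t - T) := by
    have hmvt := norm_image_sub_le_of_norm_deriv_le_segment'
      (f := fun s => H s - L * s) (a := T) (b := t)
      (f' := fun s => deriv H s - L) (C := ε / 2) ?_ ?_ t ⟨htT, le_refl t⟩
    · simpa using hmvt
    · intro x hx
      have hxpos : 0 < x := lt_of_lt_of_le hTpos hx.1
      exact (((hdiff x hxpos).hasDerivAt).sub ((hasDerivAt_id x).const_mul L |>.congr_deriv
        (by ring))).hasDerivWithinAt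
    · intro x hx
      have hx0 : T₀ ≤ x := le_trans (le_max_left _ _) hx.1
      have := hT₀ x hx0
      rw [Real.dist_eq] at this
      simpa [Real.norm_eq_abs] using le_of_lt this
  have habs : |H t / t - L| < ε := by
    have h1 : H t / t - L = (H t - L * t - (H T - L * T)) / t + (H T - L * T) / t := by
      field_simp
      ring
    rw [h1]
    have h2 : |(H t - L * t - (H T - L * T)) / t| ≤ ε / 2 := by
      rw [abs_div, abs_of_pos htpos, div_le_iff₀ htpos]
      calc |H t - L * t - (H T - L * T)| ≤ ε / 2 * (t - T) := key
        _ ≤ ε / 2 * t := by nlinarith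
    have h3 : |(H T - L * T) / t| < ε / 2 := by
      rw [abs_div, abs_of_pos htpos, div_lt_iff₀ htpos]
      have : 2 * C / ε < t := by linarith
      rw [div_lt_iff₀ hε] at this
      calc |H T - L * T| = C := rfl
        _ < ε / 2 * t := by nlinarith
    calc |(H t - L * t - (H T - L * T)) / t + (H T - L * T) / t|
        ≤ |(H t - L * t - (H T - L * T)) / t| + |(H T - L * T) / t| := abs_add_le _ _
      _ < ε / 2 + ε / 2 := by linarith
      _ = ε := by ring
  simpa [Real.dist_eq] using habs

theorem anisotropic_recession {d : ℕ}
    (A : Matrix (Fin d) (Fin d) ℝ) (hsymm : A.IsSymm) (hpd : A.PosDef)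
    (G : ℝ → ℝ)
    (hG1 : ContDiffOn ℝ 1 G (Set.Ici 0))
    (hG0 : G 0 = 0)
    (hGnonneg : ∀ r : ℝ, 0 ≤ r → 0 ≤ G r)
    (hlim : Filter.Tendsto (fun r : ℝ => Real.sqrt r * deriv G r)
      Filter.atTop (nhds (1 / Real.sqrt 2))) :
    ∀ z : Fin d → ℝ,
      Filter.Tendsto (fun lam : ℝ => G ((lam • z) ⬝ᵥ A.mulVec (lam • z) / 2) / lam)
        Filter.atTop (nhds (Real.sqrt (z ⬝ᵥ A.mulVec z))) := by
  intro z
  by_cases hz : z = 0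
  · subst hz
    simp only [smul_zero, Matrix.mulVec_zero, dotProduct_zero, zero_div, hG0]
    · simpa [Matrix.mulVec_zero] using tendsto_const_nhds
  set q : ℝ := z ⬝ᵥ A.mulVec z with hq
  have hqpos : 0 < q := by have := hpd.dotProduct_mulVec_pos hz; simpa [hq] using this
  have hdot : ∀ lam : ℝ, (lam • z) ⬝ᵥ A.mulVec (lam • z) = lam ^ 2 * q := by
    intro lam
    rw [Matrix.mulVec_smul, dotProduct_smul, smul_dotProduct]
    simp [smul_eq_mul]; ring
  -- H t = G (t^2 * q / 2)
  set H : ℝ → ℝ := fun t => G (t ^ 2 * q / 2) with hH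
  have hGdiff : ∀ r : ℝ, 0 < r → DifferentiableAt ℝ G r := by
    intro r hr
    exact (hG1.differentiableOn one_ne_zero).differentiableAt (Ici_mem_nhds hr)
  have hHdiff : ∀ t : ℝ, 0 < t → DifferentiableAt ℝ H t := by
    intro t ht
    have hin : DifferentiableAt ℝ (fun t : ℝ => t ^ 2 * q / 2) t := by fun_prop
    exact (hGdiff _ (by positivity)).comp t hin
  have hHderiv : ∀ t : ℝ, 0 < t → deriv H t = deriv G (t ^ 2 * q / 2) * (t * q) := by
    intro t ht
    have hin : HasDerivAt (fun t : ℝ => t ^ 2 * q / 2) (t * q) t := by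
      have : HasDerivAt (fun t : ℝ => t ^ 2 * q / 2) (2 * t ^ 1 * q / 2) t := by
        exact (((hasDerivAt_pow 2 t).mul_const q).div_const 2)
      simpa using this.congr_deriv (by ring)
    exact (((hGdiff _ (by positivity)).hasDerivAt).comp t hin).deriv
  -- deriv H → √q
  have hderivlim : Tendsto (deriv H) atTop (nhds (Real.sqrt q)) := by
    have hcomp : Tendsto (fun t : ℝ => t ^ 2 * q / 2) atTop atTop := by
      apply Tendsto.atTop_div_const (by norm_num)
      exact (tendsto_pow_atTop (by norm_num)).atTop_mul_const hqpos
    have h1 : Tendsto (fun t : ℝ =>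
        Real.sqrt (t ^ 2 * q / 2) * deriv G (t ^ 2 * q / 2)) atTop (nhds (1 / Real.sqrt 2)) :=
      hlim.comp hcomp
    have h2 : Tendsto (fun t : ℝ =>
        Real.sqrt (t ^ 2 * q / 2) * deriv G (t ^ 2 * q / 2) * (Real.sqrt 2 * Real.sqrt q))
        atTop (nhds (1 / Real.sqrt 2 * (Real.sqrt 2 * Real.sqrt q))) := h1.mul_const _
    have heq : 1 / Real.sqrt 2 * (Real.sqrt 2 * Real.sqrt q) = Real.sqrt q := by
      have : Real.sqrt 2 ≠ 0 := by positivity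
      field_simp
    rw [heq] at h2
    apply h2.congr'
    filter_upwards [eventually_gt_atTop 0] with t ht
    rw [hHderiv t ht]
    have hs : Real.sqrt (t ^ 2 * q / 2) = t * Real.sqrt q / Real.sqrt 2 := by
      rw [show t ^ 2 * q / 2 = (t * Real.sqrt q / Real.sqrt 2) ^ 2 by
        rw [div_pow, mul_pow, Real.sq_sqrt hqpos.le, Real.sq_sqrt (by norm_num : (0:ℝ) ≤ 2)]]
      exact Real.sqrt_sq (by positivity)
    rw [hs]
    have h2ne : Real.sqrt 2 ≠ 0 := by positivity
    have hqq : Real.sqrt q * Real.sqrt q = q := Real.mul_self_sqrt hqpos.le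
    field_simp
    ring_nf
    rw [Real.sq_sqrt hqpos.le]
  have hmain := slope_tendsto_of_deriv_tendsto H (Real.sqrt q) hHdiff hderivlim
  apply hmain.congr'
  filter_upwards [eventually_gt_atTop 0] with lam _
  simp only [hH, hdot lam]
end

section
/- Let A be a d×d diagonal matrix with strictly positive diagonal entries a_{ii}, and let g : [0,∞) → (0,∞) be C¹ with |z g'(z)/g(z)| ≤ 1/2 for all z ≥ 0. Define ψ(r) = g(‖r‖_A²/2) A rᵀ. Then the Jacobian matrix Dψ(r) is symmetric positive semidefinite for every r ∈ ℝ^d. -/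
set_option maxHeartbeats 1000000


open Matrix

theorem jacobian_psd_of_diagonal {d : ℕ}
    (a : Fin d → ℝ) (ha : ∀ i, 0 < a i)
    (A : Matrix (Fin d) (Fin d) ℝ) (hA : A = Matrix.diagonal a)
    (g : ℝ → ℝ)
    (hgpos : ∀ z : ℝ, 0 ≤ z → 0 < g z)
    (hg1 : ContDiffOn ℝ 1 g (Set.Ici 0))
    (hgdecay : ∀ z : ℝ, 0 ≤ z → |z * deriv g z / g z| ≤ 1 / 2)
    (ψ : (Fin d → ℝ) → (Fin d → ℝ))
    (hψ : ∀ r, ψ r = g (r ⬝ᵥ A.mulVec r / 2) • A.mulVec r) :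
    ∀ r : Fin d → ℝ,
      (Matrix.of fun i j => fderiv ℝ (fun x => ψ x i) r (Pi.single j 1)).IsSymm ∧
      (Matrix.of fun i j => fderiv ℝ (fun x => ψ x i) r (Pi.single j 1)).PosSemidef := by
  intro r
  -- the quadratic form
  set q : (Fin d → ℝ) → ℝ := fun x => (∑ k, a k * x k ^ 2) / 2 with hqdef
  have hq_nonneg : ∀ x, 0 ≤ q x := by
    intro x
    apply div_nonneg _ (by norm_num)
    exact Finset.sum_nonneg fun k _ => mul_nonneg (ha k).le (sq_nonneg _)
  have hψi : ∀ i, (fun x => ψ x i) = fun x => g (q x) * (a i * x i) := by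
    intro i
    funext x
    have hqx : x ⬝ᵥ (Matrix.diagonal a).mulVec x / 2 = q x := by
      simp only [dotProduct, Matrix.mulVec_diagonal, hqdef]
      congr 1
      exact Finset.sum_congr rfl fun k _ => by ring
    rw [hψ, hA]
    simp only [Pi.smul_apply, Matrix.mulVec_diagonal, smul_eq_mul, hqx]
  set s : ℝ := q r with hsdef
  set c' : ℝ := deriv g s with hc'def
  -- the linear functional v ↦ ∑ a k * r k * v k
  set L : (Fin d → ℝ) →L[ℝ] ℝ :=
      ∑ k, (a k * r k) • (ContinuousLinearMap.proj k : (Fin d → ℝ) →L[ℝ] ℝ) with hLdef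
  have hLapply : ∀ j, L (Pi.single j 1) = a j * r j := by
    intro j
    simp only [hLdef, ContinuousLinearMap.sum_apply, ContinuousLinearMap.smul_apply,
      ContinuousLinearMap.proj_apply, Pi.single_apply, smul_eq_mul]
    rw [Finset.sum_eq_single j]
    · simp
    · intro k _ hk
      simp [hk]
    · simp
  have key : ∀ i, HasFDerivAt (fun x => ψ x i)
      ((g s) • ((a i) • (ContinuousLinearMap.proj i : (Fin d → ℝ) →L[ℝ] ℝ))
        + (a i * r i) • (c' • L)) r := by
    intro i
    rw [hψi i]
    rcases eq_or_ne r 0 with hr | hr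
    · -- boundary case r = 0
      subst hr
      have hs0 : s = 0 := by simp [hsdef, hqdef]
      have hL0 : L = 0 := by
        ext v
        simp [hLdef]
      rw [hs0]
      simp only [Pi.zero_apply, mul_zero, zero_smul, add_zero]
      rw [hasFDerivAt_iff_isLittleO_nhds_zero]
      have hco : ContinuousOn g (Set.Ici 0) := hg1.continuousOn
      have hqcont : Continuous q := by
        apply Continuous.div_const
        exact continuous_finset_sum _ fun k _ => by fun_prop
      have htend : Filter.Tendsto (fun h : Fin d → ℝ => g (q h) - g 0) (nhds 0) (nhds 0) := by
        have h1 : Filter.Tendsto q (nhds 0) (nhdsWithin 0 (Set.Ici 0)) := by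
          rw [tendsto_nhdsWithin_iff]
          constructor
          · have := hqcont.tendsto (0 : Fin d → ℝ)
            simpa [hqdef] using this
          · exact Filter.Eventually.of_forall fun x => hq_nonneg x
        have h2 := (hco 0 (by simp)).tendsto.comp h1
        have : Filter.Tendsto (fun h : Fin d → ℝ => g (q h)) (nhds 0) (nhds (g 0)) := h2
        have := this.sub_const (g 0)
        simpa using this
      have hlo : (fun h : Fin d → ℝ => g (q h) - g 0) =o[nhds 0] (fun _ => (1 : ℝ)) := by
        rwa [Asymptotics.isLittleO_one_iff]
      have hbo : (fun h : Fin d → ℝ => a i * h i) =O[nhds 0] (fun h : Fin d → ℝ => ‖h‖) := by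
        have : (fun h : Fin d → ℝ => a i * h i)
            = fun h => ((a i) • (ContinuousLinearMap.proj i : (Fin d → ℝ) →L[ℝ] ℝ)) h := by
          funext h; simp
        rw [this]
        exact (((a i) • (ContinuousLinearMap.proj i : (Fin d → ℝ) →L[ℝ] ℝ)).isBigO_id
          (nhds 0)).norm_right
      have := hlo.mul_isBigO hbo
      have h3 : (fun h : Fin d → ℝ => (g (q h) - g 0) * (a i * h i)) =o[nhds 0]
          (fun h : Fin d → ℝ => h) := by
        have h4 := this
        simp only [one_mul] at h4
        exact h4.of_norm_right
      apply h3.congr' _ (by rfl)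
      filter_upwards with h
      have hq00 : q 0 = 0 := by simp [hqdef]
      rw [zero_add, hq00]
      simp only [Pi.zero_apply, mul_zero, ContinuousLinearMap.smul_apply,
        ContinuousLinearMap.proj_apply, smul_eq_mul]
      ring
    · -- interior case r ≠ 0
      have hspos : 0 < s := by
        rw [hsdef, hqdef]
        apply div_pos _ (by norm_num)
        obtain ⟨i0, hi0⟩ := Function.ne_iff.mp hr
        apply Finset.sum_pos' (fun k _ => mul_nonneg (ha k).le (sq_nonneg _))
        exact ⟨i0, Finset.mem_univ _, mul_pos (ha i0)
          ((pow_pos (abs_pos.mpr hi0) 2).trans_eq (sq_abs (r i0)))⟩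
      have hgd : HasDerivAt g c' s := by
        have hmem : Set.Ici (0:ℝ) ∈ nhds s :=
          Filter.mem_of_superset (Ioi_mem_nhds hspos) Set.Ioi_subset_Ici_self
        have := (hg1.contDiffAt hmem).differentiableAt one_ne_zero
        exact this.hasDerivAt
      have hq : HasFDerivAt q L r := by
        have hterm : ∀ k : Fin d, HasFDerivAt (fun x : Fin d → ℝ => a k * x k ^ 2 / 2)
            ((a k * r k) • (ContinuousLinearMap.proj k : (Fin d → ℝ) →L[ℝ] ℝ)) r := by
          intro k
          have hp : HasFDerivAt (fun x : Fin d → ℝ => x k)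
              (ContinuousLinearMap.proj k : (Fin d → ℝ) →L[ℝ] ℝ) r :=
            (ContinuousLinearMap.proj k : (Fin d → ℝ) →L[ℝ] ℝ).hasFDerivAt
          have hm := (hp.fun_mul hp).const_mul (a k / 2)
          have hfun : (fun x : Fin d → ℝ => a k / 2 * (x k * x k))
              = fun x : Fin d → ℝ => a k * x k ^ 2 / 2 := by
            funext x; ring
          rw [hfun] at hm
          refine hm.congr_fderiv ?_
          ext v
          simp only [ContinuousLinearMap.smul_apply, ContinuousLinearMap.add_apply,
            ContinuousLinearMap.proj_apply, smul_eq_mul]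
          ring
        have hsum := HasFDerivAt.fun_sum (fun k (_ : k ∈ Finset.univ) => hterm k)
        have hfun : (fun x : Fin d → ℝ => ∑ k, a k * x k ^ 2 / 2) = q := by
          funext x
          show _ = (∑ k, a k * x k ^ 2) / 2
          rw [Finset.sum_div]
        rw [hfun] at hsum
        exact hsum
      have hcomp := hgd.comp_hasFDerivAt r hq
      have hlin : HasFDerivAt (fun x : Fin d → ℝ => a i * x i)
          ((a i) • (ContinuousLinearMap.proj i : (Fin d → ℝ) →L[ℝ] ℝ)) r := by
        have hp : HasFDerivAt (fun x : Fin d → ℝ => x i)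
            (ContinuousLinearMap.proj i : (Fin d → ℝ) →L[ℝ] ℝ) r :=
          (ContinuousLinearMap.proj i : (Fin d → ℝ) →L[ℝ] ℝ).hasFDerivAt
        exact hp.const_mul (a i)
      have hmul := hcomp.fun_mul hlin
      exact hmul
  have hM : ∀ i j, fderiv ℝ (fun x => ψ x i) r (Pi.single j 1)
      = c' * (a i * r i) * (a j * r j) + (if i = j then g s * a i else 0) := by
    intro i j
    rw [(key i).fderiv]
    simp only [ContinuousLinearMap.add_apply, ContinuousLinearMap.smul_apply,
      ContinuousLinearMap.proj_apply, Pi.single_apply, smul_eq_mul, hLapply]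
    split_ifs <;> ring
  constructor
  · -- symmetry
    rw [Matrix.IsSymm]
    ext i j
    simp only [Matrix.transpose_apply, Matrix.of_apply]
    rw [hM, hM]
    by_cases h : i = j
    · subst h; ring
    · simp [h, Ne.symm h]
      ring
  · rw [Matrix.posSemidef_iff_dotProduct_mulVec]
    constructor
    · -- hermitian
      show _ = _
      ext i j
      simp only [Matrix.conjTranspose_apply, Matrix.of_apply, star_trivial]
      rw [hM, hM]
      by_cases h : i = j
      · subst h; ring
      · simp [h, Ne.symm h]
        ring
    · -- quadratic form
      intro x
      simp only [star_trivial]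
      set S : ℝ := ∑ k, a k * r k * x k with hSdef
      set T : ℝ := ∑ k, a k * x k ^ 2 with hTdef
      set Q : ℝ := ∑ k, a k * r k ^ 2 with hQdef
      have hQ2s : Q = 2 * s := by rw [hsdef, hqdef, hQdef]; ring
      have hT_nonneg : 0 ≤ T :=
        Finset.sum_nonneg fun k _ => mul_nonneg (ha k).le (sq_nonneg _)
      have hs_nonneg : 0 ≤ s := hq_nonneg r
      have hgs : 0 < g s := hgpos s hs_nonneg
      have hquad : x ⬝ᵥ (Matrix.of fun i j => fderiv ℝ (fun y => ψ y i) r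
          (Pi.single j 1)).mulVec x = c' * S ^ 2 + g s * T := by
        simp only [dotProduct, Matrix.mulVec, dotProduct, Matrix.of_apply]
        have hinner : ∀ i, ∑ j, (fderiv ℝ (fun y => ψ y i) r (Pi.single j 1)) * x j
            = c' * (a i * r i) * S + g s * (a i * x i) := by
          intro i
          have : ∀ j, (fderiv ℝ (fun y => ψ y i) r (Pi.single j 1)) * x j
              = c' * (a i * r i) * (a j * r j * x j)
                + (if i = j then g s * (a i * x j) else 0) := by
            intro j
            rw [hM]
            split_ifs <;> ring
          rw [Finset.sum_congr rfl fun j _ => this j, Finset.sum_add_distrib,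
            ← Finset.mul_sum, Finset.sum_ite_eq (Finset.univ) i
              (fun j => g s * (a i * x j))]
          simp [hSdef]
        rw [Finset.sum_congr rfl fun i _ => by rw [hinner i]]
        have : ∀ i : Fin d, x i * (c' * (a i * r i) * S + g s * (a i * x i))
            = c' * S * (a i * r i * x i) + g s * (a i * x i ^ 2) := by
          intro i; ring
        rw [Finset.sum_congr rfl fun i _ => this i, Finset.sum_add_distrib,
          ← Finset.mul_sum, ← Finset.mul_sum, ← hSdef, ← hTdef]
        ring
      rw [hquad]
      rcases le_or_gt 0 c' with hc | hc
      · exact add_nonneg (mul_nonneg hc (sq_nonneg _))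
          (mul_nonneg hgs.le hT_nonneg)
      · -- Cauchy-Schwarz
        have hCS : S ^ 2 ≤ Q * T := by
          have := Finset.sum_mul_sq_le_sq_mul_sq Finset.univ
            (fun k => Real.sqrt (a k) * r k) (fun k => Real.sqrt (a k) * x k)
          have hfg : ∀ k : Fin d, (Real.sqrt (a k) * r k) * (Real.sqrt (a k) * x k)
              = a k * r k * x k := by
            intro k
            calc (Real.sqrt (a k) * r k) * (Real.sqrt (a k) * x k)
                = (Real.sqrt (a k) * Real.sqrt (a k)) * (r k * x k) := by ring
              _ = a k * r k * x k := by rw [Real.mul_self_sqrt (ha k).le]; ring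
          have hf2 : ∀ k : Fin d, (Real.sqrt (a k) * r k) ^ 2 = a k * r k ^ 2 := by
            intro k
            rw [mul_pow, Real.sq_sqrt (ha k).le]
          have hg2 : ∀ k : Fin d, (Real.sqrt (a k) * x k) ^ 2 = a k * x k ^ 2 := by
            intro k
            rw [mul_pow, Real.sq_sqrt (ha k).le]
          rw [Finset.sum_congr rfl fun k _ => hfg k, Finset.sum_congr rfl fun k _ => hf2 k,
            Finset.sum_congr rfl fun k _ => hg2 k] at this
          exact this
        have hdecay := hgdecay s hs_nonneg
        have habs : |s * c'| ≤ g s / 2 := by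
          have h1 : |s * c' / g s| = |s * c'| / g s := by
            rw [abs_div, abs_of_pos hgs]
          rw [h1] at hdecay
          rw [div_le_iff₀ hgs] at hdecay
          linarith
        have hkey : 0 ≤ c' * Q + g s := by
          have h2 : -(g s / 2) ≤ s * c' := neg_le_of_abs_le habs
          rw [hQ2s]
          nlinarith
        calc 0 ≤ (c' * Q + g s) * T := mul_nonneg hkey hT_nonneg
        _ = c' * (Q * T) + g s * T := by ring
        _ ≤ c' * S ^ 2 + g s * T := by
            have := mul_le_mul_of_nonpos_left hCS hc.le
            linarith
end
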